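/- Let A, B, C be affinely independent points of the Euclidean plane E and let X and Y be points in the topological interior of the convex hull of {A, B, C}. Then ∠ C A X + ∠ C B Y + ∠ A C B < π, i.e. the unsigned angle at A between C and X, plus the unsigned angle at B between C and Y, plus the unsigned angle of the triangle at C, is strictly less than π. -/

import Mathlib

open EuclideanGeometry Real

noncomputable section

local notation "E" => EuclideanSpace ℝ (Fin 2)

open InnerProductGeometry in
/-- If `|⟪u,v⟫| < ‖u‖‖v‖` and `b, c > 0` then the angle between `u` and `b•v + c•u`
is strictly smaller than the angle between `u` and `v`. -/
private lemma angle_pos_comb_lt {F : Type*} [NormedAddCommGroup F] [InnerProductSpace ℝ F]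
    {u v : F} (hcs : |(inner ℝ u v : ℝ)| < ‖u‖ * ‖v‖) {b c : ℝ} (hb : 0 < b) (hc : 0 < c) :
    InnerProductGeometry.angle u (b • v + c • u) < InnerProductGeometry.angle u v := by
  set t : ℝ := inner ℝ u v with ht
  have habs := abs_lt.mp hcs
  have hu : u ≠ 0 := by
    rintro rfl
    simp at hcs
    exact absurd hcs (by simp)
  have hv : v ≠ 0 := by
    rintro rfl
    simp at hcs
    exact absurd hcs (by simp)
  have hu0 : 0 < ‖u‖ := norm_pos_iff.2 hu
  have hv0 : 0 < ‖v‖ := norm_pos_iff.2 hv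
  set w : F := b • v + c • u with hwdef
  have hw : w ≠ 0 := by
    intro h0
    have hveq : v = (-(c / b)) • u := by
      have hbv : b • v = (-c) • u := by
        rw [neg_smul, eq_neg_iff_add_eq_zero]
        exact h0
      have := congrArg (fun z => (b⁻¹ : ℝ) • z) hbv
      simpa [smul_smul, inv_mul_cancel₀ hb.ne', neg_div, div_eq_inv_mul] using this
    have ht2 : t = -(c / b) * ‖u‖ ^ 2 := by
      rw [ht, hveq, real_inner_smul_right, real_inner_self_eq_norm_sq]
    have hnv : ‖v‖ = (c / b) * ‖u‖ := by
      rw [hveq, norm_smul, Real.norm_eq_abs, abs_neg, abs_of_pos (div_pos hc hb)]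
    nlinarith [habs.1, habs.2, hu0, div_pos hc hb]
  have hw0 : 0 < ‖w‖ := norm_pos_iff.2 hw
  have hiw : (inner ℝ u w : ℝ) = b * t + c * ‖u‖ ^ 2 := by
    rw [hwdef, inner_add_right, real_inner_smul_right, real_inner_smul_right,
      real_inner_self_eq_norm_sq, ht]
  have htri : ‖w‖ ≤ b * ‖v‖ + c * ‖u‖ := by
    calc ‖w‖ ≤ ‖b • v‖ + ‖c • u‖ := norm_add_le _ _
    _ = b * ‖v‖ + c * ‖u‖ := by
        rw [norm_smul, norm_smul, Real.norm_eq_abs, Real.norm_eq_abs,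
          abs_of_pos hb, abs_of_pos hc]
  have htri2 : b * ‖v‖ - c * ‖u‖ ≤ ‖w‖ := by
    have h1 := norm_sub_norm_le (b • v) (-(c • u))
    rw [sub_neg_eq_add, norm_neg] at h1
    calc b * ‖v‖ - c * ‖u‖ = ‖b • v‖ - ‖c • u‖ := by
          rw [norm_smul, norm_smul, Real.norm_eq_abs, Real.norm_eq_abs,
            abs_of_pos hb, abs_of_pos hc]
    _ ≤ ‖w‖ := h1
  have hkey : t * ‖w‖ < (b * t + c * ‖u‖ ^ 2) * ‖v‖ := by
    rcases le_or_gt 0 t with hts | hts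
    · have h1 : t * ‖w‖ ≤ t * (b * ‖v‖ + c * ‖u‖) := mul_le_mul_of_nonneg_left htri hts
      have h2 := mul_lt_mul_of_pos_left habs.2 (mul_pos hc hu0)
      nlinarith [h1, h2]
    · have h1 : t * ‖w‖ ≤ t * (b * ‖v‖ - c * ‖u‖) := by nlinarith
      have h2' : -t < ‖u‖ * ‖v‖ := by linarith [habs.1]
      have h2 := mul_lt_mul_of_pos_left h2' (mul_pos hc hu0)
      nlinarith [h1, h2]
  have hcos : Real.cos (InnerProductGeometry.angle u v)
      < Real.cos (InnerProductGeometry.angle u w) := by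
    rw [cos_angle, cos_angle, div_lt_div_iff₀ (by positivity) (by positivity), hiw, ← ht]
    nlinarith [hkey, hu0]
  by_contra hle
  push_neg at hle
  have : Real.cos (InnerProductGeometry.angle u w) ≤ Real.cos (InnerProductGeometry.angle u v) := by
    rcases eq_or_lt_of_le hle with heq | hlt
    · rw [heq]
    · exact le_of_lt <| Real.strictAntiOn_cos
        ⟨InnerProductGeometry.angle_nonneg _ _, InnerProductGeometry.angle_le_pi _ _⟩
        ⟨InnerProductGeometry.angle_nonneg _ _, InnerProductGeometry.angle_le_pi _ _⟩ hlt
  linarith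

/-- If `X` lies in the interior of triangle `A B C`, the angle at `A` towards `X`
is strictly smaller than the angle of the triangle at `A`. -/
private lemma angle_interior_lt (A B C X : E)
    (h : AffineIndependent ℝ ![A, B, C])
    (hX : X ∈ interior (convexHull ℝ ({A, B, C} : Set E))) :
    ∠ C A X < ∠ C A B := by
  have hAC : A ≠ C := h.injective.ne (by decide : (0 : Fin 3) ≠ 2)
  have hAB : A ≠ B := h.injective.ne (by decide : (0 : Fin 3) ≠ 1)
  -- non-collinearity and strict Cauchy-Schwarz at A
  have hncol : ¬Collinear ℝ ({C, A, B} : Set E) := by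
    have h' : ¬Collinear ℝ ({A, B, C} : Set E) := affineIndependent_iff_not_collinear_set.mp h
    have hset : ({C, A, B} : Set E) = {A, B, C} := by
      ext x; simp only [Set.mem_insert_iff, Set.mem_singleton_iff]; tauto
    rwa [hset]
  have hth0 : 0 < ∠ C A B := angle_pos_of_not_collinear hncol
  have hthpi : ∠ C A B < π := angle_lt_pi_of_not_collinear hncol
  have hcoslt : Real.cos (∠ C A B) < 1 := by
    have := Real.strictAntiOn_cos ⟨le_refl (0 : ℝ), Real.pi_pos.le⟩
      ⟨hth0.le, hthpi.le⟩ hth0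
    simpa using this
  have hcosgt : -1 < Real.cos (∠ C A B) := by
    have := Real.strictAntiOn_cos ⟨hth0.le, hthpi.le⟩
      ⟨Real.pi_pos.le, le_refl π⟩ hthpi
    simpa using this
  have hu0 : (0 : ℝ) < ‖C - A‖ := by
    rw [norm_pos_iff, sub_ne_zero]; exact fun hh => hAC hh.symm
  have hv0 : (0 : ℝ) < ‖B - A‖ := by
    rw [norm_pos_iff, sub_ne_zero]; exact fun hh => hAB hh.symm
  have hangle_eq : ∠ C A B = InnerProductGeometry.angle (C - A) (B - A) := rfl
  have hcs : |(inner ℝ (C - A) (B - A) : ℝ)| < ‖C - A‖ * ‖B - A‖ := by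
    have hinner : (inner ℝ (C - A) (B - A) : ℝ)
        = Real.cos (∠ C A B) * (‖C - A‖ * ‖B - A‖) := by
      rw [hangle_eq]
      exact (InnerProductGeometry.cos_angle_mul_norm_mul_norm _ _).symm
    rw [hinner, abs_mul, abs_of_pos (by positivity : (0:ℝ) < ‖C - A‖ * ‖B - A‖)]
    have : |Real.cos (∠ C A B)| < 1 := abs_lt.mpr ⟨hcosgt, hcoslt⟩
    nlinarith [mul_pos hu0 hv0]
  -- barycentric coordinates of X
  have htop : affineSpan ℝ (Set.range ![A, B, C]) = ⊤ := by
    rw [h.affineSpan_eq_top_iff_card_eq_finrank_add_one]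
    simp
  let bas : AffineBasis (Fin 3) ℝ E := ⟨![A, B, C], h, htop⟩
  have hrange : Set.range ((bas : Fin 3 → E)) = ({A, B, C} : Set E) := by
    apply Set.eq_of_subset_of_subset
    · rintro x ⟨i, rfl⟩
      fin_cases i
      exacts [Set.mem_insert _ _, Set.mem_insert_of_mem _ (Set.mem_insert _ _),
        Set.mem_insert_of_mem _ (Set.mem_insert_of_mem _ rfl)]
    · intro x hx
      simp only [Set.mem_insert_iff, Set.mem_singleton_iff] at hx
      rcases hx with rfl | rfl | rfl
      exacts [⟨0, rfl⟩, ⟨1, rfl⟩, ⟨2, rfl⟩]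
  have hXpos : ∀ i, 0 < bas.coord i X := by
    rw [← hrange, AffineBasis.interior_convexHull] at hX
    exact hX
  have hsum : ∑ i, bas.coord i X = 1 := bas.sum_coord_apply_eq_one X
  have hXeq : X = bas.coord 0 X • A + bas.coord 1 X • B + bas.coord 2 X • C := by
    have h2 := bas.affineCombination_coord_eq_self X
    rw [Finset.affineCombination_eq_linear_combination _ _ _ hsum, Fin.sum_univ_three] at h2
    have e0 : (bas : Fin 3 → E) 0 = A := rfl
    have e1 : (bas : Fin 3 → E) 1 = B := rfl
    have e2 : (bas : Fin 3 → E) 2 = C := rfl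
    rw [e0, e1, e2] at h2
    exact h2.symm
  have hXA : X - A = bas.coord 1 X • (B - A) + bas.coord 2 X • (C - A) := by
    set a0 := bas.coord 0 X with ha0
    set a1 := bas.coord 1 X with ha1
    set a2 := bas.coord 2 X with ha2
    have h0 : a0 = 1 - a1 - a2 := by
      rw [Fin.sum_univ_three] at hsum; linarith
    rw [hXeq, h0]
    module
  -- conclude
  have := angle_pos_comb_lt hcs (hXpos 1) (hXpos 2)
  rw [← hXA] at this
  exact this

/-- If `X` and `Y` lie in the interior of the triangle `A B C`, then the angle at `A`
between `C` and `X`, plus the angle at `B` between `C` and `Y`, plus the angle of the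
triangle at `C`, is strictly less than `π`. -/
theorem angle_sum_lt_pi_of_mem_interior_convexHull (A B C X Y : E)
    (h : AffineIndependent ℝ ![A, B, C])
    (hX : X ∈ interior (convexHull ℝ ({A, B, C} : Set E)))
    (hY : Y ∈ interior (convexHull ℝ ({A, B, C} : Set E))) :
    ∠ C A X + ∠ C B Y + ∠ A C B < π := by
  have hAC : A ≠ C := h.injective.ne (by decide : (0 : Fin 3) ≠ 2)
  have hBC : B ≠ C := h.injective.ne (by decide : (1 : Fin 3) ≠ 2)
  have hset : ({B, A, C} : Set E) = {A, B, C} := by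
    ext x; simp only [Set.mem_insert_iff, Set.mem_singleton_iff]; tauto
  have h' : AffineIndependent ℝ ![B, A, C] := by
    rw [affineIndependent_iff_not_collinear_set, hset,
      ← affineIndependent_iff_not_collinear_set]
    exact h
  have h1 : ∠ C A X < ∠ C A B := angle_interior_lt A B C X h hX
  have h2 : ∠ C B Y < ∠ C B A := by
    have := angle_interior_lt B A C Y h' (by rwa [hset])
    exact this
  have hsum : ∠ C A B + ∠ A B C + ∠ B C A = π :=
    EuclideanGeometry.angle_add_angle_add_angle_eq_pi B hAC
  rw [EuclideanGeometry.angle_comm A B C, EuclideanGeometry.angle_comm B C A] at hsum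
  linarith
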